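/- Let X ⊂ ℝ^d be a compact convex set, let h : X → ℝ be L-smooth, let x ∈ X and r > 0, and let z ∼ Z(x,r). Then E[ ‖ G_h(x;r,z) − ⟨∇h(x), z⟩·z ‖² ] ≤ r²·L²·(d+6)³/4. -/

import Mathlib

open MeasureTheory ProbabilityTheory Real Set Filter Pointwise
open scoped Classical ENNReal RealInnerProductSpace

noncomputable section

variable {d : ℕ}

/-- Euclidean metric projection onto a set: a nearest point of `C`, if one exists. -/
noncomputable def metricProj (C : Set (EuclideanSpace ℝ (Fin d)))
    (x : EuclideanSpace ℝ (Fin d)) : EuclideanSpace ℝ (Fin d) :=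
  if h : ∃ y, y ∈ C ∧ ∀ c ∈ C, dist x y ≤ dist x c then h.choose else x

/-- The standard Gaussian measure `N(0, I_d)` on `ℝ^d`. -/
noncomputable def stdGaussian (d : ℕ) : Measure (EuclideanSpace ℝ (Fin d)) :=
  (Measure.pi fun _ : Fin d => gaussianReal 0 1).map
    (MeasurableEquiv.toLp 2 (Fin d → ℝ))

/-- The uniform distribution on the sphere of radius `√d` in `ℝ^d`,
realized as the pushforward of the standard Gaussian under radial normalization. -/
noncomputable def uniformSphere (d : ℕ) : Measure (EuclideanSpace ℝ (Fin d)) :=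
  (stdGaussian d).map (fun z => (Real.sqrt d / ‖z‖) • z)

/-- The set `S(x,r) = {(s - x)/r : s ∈ X}`. -/
def sShift (X : Set (EuclideanSpace ℝ (Fin d))) (x : EuclideanSpace ℝ (Fin d)) (r : ℝ) :
    Set (EuclideanSpace ℝ (Fin d)) :=
  (fun s => r⁻¹ • (s - x)) '' X

/-- The law `Z(x,r)` of the Gaussian perturbation projected onto `S(x,r)`. -/
noncomputable def zDist (X : Set (EuclideanSpace ℝ (Fin d))) (x : EuclideanSpace ℝ (Fin d))
    (r : ℝ) : Measure (EuclideanSpace ℝ (Fin d)) :=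
  (stdGaussian d).map (metricProj (sShift X x r))

/-- `h` is `Λ`-Lipschitz on `X`. -/
def LipOn (h : EuclideanSpace ℝ (Fin d) → ℝ) (Λ : ℝ)
    (X : Set (EuclideanSpace ℝ (Fin d))) : Prop :=
  ∀ x ∈ X, ∀ y ∈ X, |h x - h y| ≤ Λ * ‖x - y‖

/-- `h` is `L`-smooth on `X`: differentiable with `L`-Lipschitz gradient on `X`. -/
def IsSmoothOn (h : EuclideanSpace ℝ (Fin d) → ℝ) (L : ℝ)
    (X : Set (EuclideanSpace ℝ (Fin d))) : Prop :=
  Differentiable ℝ h ∧ ∀ x ∈ X, ∀ y ∈ X, ‖gradient h x - gradient h y‖ ≤ L * ‖x - y‖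

/-- The gradient mapping `𝔤(x; M) = M (x - P_X[x - (1/M) ∇F(x)])`. -/
noncomputable def gradMap (X : Set (EuclideanSpace ℝ (Fin d)))
    (F : EuclideanSpace ℝ (Fin d) → ℝ) (M : ℝ) (x : EuclideanSpace ℝ (Fin d)) :
    EuclideanSpace ℝ (Fin d) :=
  M • (x - metricProj X (x - (1 / M) • gradient F x))

/-- The 2-ZFGD iterates, given a realization `zbar` of the Gaussian samples. -/
noncomputable def zfgd (X : Set (EuclideanSpace ℝ (Fin d))) (δ η : ℝ) (r : ℕ → ℝ)
    (f φ : EuclideanSpace ℝ (Fin d) → ℝ) (zbar : ℕ → EuclideanSpace ℝ (Fin d))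
    (x0 : EuclideanSpace ℝ (Fin d)) : ℕ → EuclideanSpace ℝ (Fin d)
  | 0 => x0
  | k + 1 =>
    let x := zfgd X δ η r f φ zbar x0 k
    let z := metricProj (sShift X x (r k)) (zbar k)
    metricProj ((1 - δ) • X)
      (x - η • (gradient f x + ((φ (x + r k • z) - φ x) / r k) • z))

/-- The box `Π_β [l β, u β] ⊆ ℝ^d`. -/
def box (l u : Fin d → ℝ) : Set (EuclideanSpace ℝ (Fin d)) :=
  {x | ∀ β, x β ∈ Set.Icc (l β) (u β)}

/-- `h` is `(L 1, …, L d)`-coordinatewise smooth on `X`. -/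
def CoordSmoothOn (h : EuclideanSpace ℝ (Fin d) → ℝ) (L : Fin d → ℝ)
    (X : Set (EuclideanSpace ℝ (Fin d))) : Prop :=
  Differentiable ℝ h ∧ ∀ (β : Fin d), ∀ x ∈ X, ∀ t : ℝ,
    x + t • EuclideanSpace.single β 1 ∈ X →
    |gradient h (x + t • EuclideanSpace.single β 1) β - gradient h x β| ≤ L β * |t|

/-- Joint law of a pair: uniform coordinate on `Fin d` and uniform sign on `{-1, 1}`. -/
noncomputable def unifPair (d : ℕ) : Measure (Fin d × ℝ) :=
  (((d : ℝ≥0∞)⁻¹ • Measure.count : Measure (Fin d))).prod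
    (((2 : ℝ≥0∞)⁻¹ • (Measure.dirac (-1) + Measure.dirac 1) : Measure ℝ))

/-- The RZFCD iterates, given realizations `a` of the coordinate draws and `s` of the
sign draws. -/
noncomputable def rzfcd (l u η : Fin d → ℝ) (r : Fin d → ℕ → ℝ)
    (f φ : EuclideanSpace ℝ (Fin d) → ℝ)
    (a : ℕ → Fin d) (s : ℕ → ℝ) (x0 : EuclideanSpace ℝ (Fin d)) :
    ℕ → EuclideanSpace ℝ (Fin d)
  | 0 => x0
  | k + 1 =>
    let x := rzfcd l u η r f φ a s x0 k
    let β := a k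
    let z : ℝ := if u β < x β + r β k then -1 else if x β - r β k < l β then 1 else s k
    let g : ℝ := gradient f x β +
      ((φ (x + (r β k * z) • EuclideanSpace.single β 1) - φ x) / r β k) * z
    WithLp.toLp 2 (Function.update x.ofLp β (max (l β) (min (u β) (x β - η β * g))))

section AuxTwoPoint

open scoped NNReal

local notation "γ" => gaussianReal 0 1

private def gw (x : ℝ) : ℝ := Real.exp (-(x^2)/2)

lemma gw_eq (x : ℝ) : gw x = Real.exp (-(1/2) * x ^ 2) := by
  unfold gw; ring_nf

lemma gw_cont : Continuous gw := by
  unfold gw; continuity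

lemma pow_le_exp_aux (y : ℝ) (hy : 0 ≤ y) (m : ℕ) : y ^ m ≤ m.factorial * Real.exp y := by
  have h1 : y ^ m / m.factorial ≤ ∑ i ∈ Finset.range (m+1), y ^ i / i.factorial :=
    Finset.single_le_sum (f := fun i : ℕ => y ^ i / (i.factorial : ℝ))
      (fun i _ => by positivity) (Finset.self_mem_range_succ m)
  have h2 := Real.sum_le_exp_of_nonneg hy (m+1)
  have hm : (0:ℝ) < m.factorial := by positivity
  calc y ^ m = (y ^ m / m.factorial) * m.factorial := by field_simp
    _ ≤ Real.exp y * m.factorial := mul_le_mul_of_nonneg_right (h1.trans h2) hm.le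
    _ = m.factorial * Real.exp y := by ring

lemma integrable_pow_gw (n : ℕ) : Integrable (fun x : ℝ => x ^ n * gw x) := by
  apply Integrable.mono' ((integrable_exp_neg_mul_sq (by norm_num : (0:ℝ) < 1/4)).const_mul
    (1 + 4 ^ n * n.factorial))
  · exact ((continuous_pow n).mul gw_cont).aestronglyMeasurable
  · filter_upwards with x
    have hgw : 0 < gw x := Real.exp_pos _
    rw [Real.norm_eq_abs, abs_mul, abs_of_pos hgw]
    have h1 : |x| ^ n ≤ 1 + |x| ^ (2 * n) := by
      rcases le_total (|x|) 1 with h | h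
      · have := pow_le_one₀ (abs_nonneg x) h (n := n)
        nlinarith [pow_nonneg (abs_nonneg x) (2*n)]
      · have : |x| ^ n ≤ |x| ^ (2 * n) := pow_le_pow_right₀ h (by omega)
        linarith
    have h2 : |x| ^ (2 * n) = 4 ^ n * (x ^ 2 / 4) ^ n := by
      rw [pow_mul, sq_abs, ← mul_pow]; congr 1; ring
    have h3 : (x^2/4) ^ n ≤ n.factorial * Real.exp (x^2/4) :=
      pow_le_exp_aux _ (by positivity) n
    have key : |x ^ n| ≤ (1 + 4 ^ n * n.factorial) * Real.exp (x^2/4) := by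
      rw [abs_pow]
      have he : (1:ℝ) ≤ Real.exp (x^2/4) := by
        rw [Real.one_le_exp_iff]; positivity
      calc |x| ^ n ≤ 1 + |x| ^ (2*n) := h1
        _ = 1 + 4 ^ n * (x^2/4) ^ n := by rw [h2]
        _ ≤ 1 * Real.exp (x^2/4) + 4 ^ n * (n.factorial * Real.exp (x^2/4)) := by
            have h4 : (0:ℝ) ≤ (4:ℝ) ^ n := by positivity
            nlinarith
        _ = (1 + 4 ^ n * n.factorial) * Real.exp (x^2/4) := by ring
    have hC : (0:ℝ) ≤ 1 + 4 ^ n * n.factorial := by positivity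
    have final : |x ^ n| * gw x ≤ (1 + 4 ^ n * n.factorial) * Real.exp (-(1/4) * x ^ 2) := by
      calc |x ^ n| * gw x ≤ ((1 + 4 ^ n * n.factorial) * Real.exp (x^2/4)) * gw x :=
            mul_le_mul_of_nonneg_right key hgw.le
        _ = (1 + 4 ^ n * n.factorial) * Real.exp (-(1/4) * x ^ 2) := by
            unfold gw
            rw [mul_assoc, ← Real.exp_add]; ring_nf
    exact final

lemma gw_int0 : ∫ x : ℝ, gw x = Real.sqrt (2 * π) := by
  simp only [gw_eq]
  rw [integral_gaussian (1/2)]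
  rw [show π / (1/2) = 2 * π by ring]

lemma gw_rec (n : ℕ) : ∫ x : ℝ, x ^ (n+2) * gw x = (n+1 : ℝ) * ∫ x : ℝ, x ^ n * gw x := by
  have hu : ∀ x : ℝ, HasDerivAt (fun y : ℝ => y ^ (n+1)) ((n+1 : ℝ) * x ^ n) x := by
    intro x; simpa using hasDerivAt_pow (n+1) x
  have hv : ∀ x : ℝ, HasDerivAt (fun y : ℝ => -gw y) (x * gw x) x := by
    intro x
    have h1 : HasDerivAt (fun y : ℝ => -(y^2)/2) (-x) x := by
      have h := ((hasDerivAt_pow 2 x).div_const 2).neg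
      have e : (fun y : ℝ => -(y^2)/2) = -fun x => x^2/2 := by
        ext y; simp only [Pi.neg_apply]; ring
      rw [e]; exact h.congr_deriv (by norm_num)
    have h2 := (h1.exp).neg
    unfold gw
    exact h2.congr_deriv (by ring)
  have key := integral_mul_deriv_eq_deriv_mul_of_integrable (fun x _ => hu x) (fun x _ => hv x)
    (by
      apply (integrable_pow_gw (n+2)).congr
      filter_upwards with x
      simp only [Pi.mul_apply, Pi.neg_apply]; ring)
    (by
      apply (((integrable_pow_gw n).const_mul (n+1:ℝ)).neg).congr
      filter_upwards with x
      simp only [Pi.mul_apply, Pi.neg_apply]; ring)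
    (by
      apply ((integrable_pow_gw (n+1)).neg).congr
      filter_upwards with x
      simp only [Pi.mul_apply, Pi.neg_apply]; ring)
  have e1 : ∫ x : ℝ, x ^ (n+1) * (x * gw x) = ∫ x : ℝ, x ^ (n+2) * gw x := by
    congr 1; ext x; ring
  have e2 : ∫ x : ℝ, (n+1:ℝ) * x ^ n * -gw x = -((n+1:ℝ) * ∫ x : ℝ, x ^ n * gw x) := by
    rw [← MeasureTheory.integral_const_mul, ← integral_neg]
    congr 1; ext x; ring
  rw [e1] at key
  rw [key, e2, neg_neg]

lemma gpdf_eq (x : ℝ) : gaussianPDFReal 0 1 x = (Real.sqrt (2 * π))⁻¹ * gw x := by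
  rw [gaussianPDFReal_def]
  unfold gw
  norm_num

lemma gauss_integral (g : ℝ → ℝ) :
    ∫ x, g x ∂(gaussianReal 0 1) = ∫ x, gaussianPDFReal 0 1 x * g x := by
  rw [gaussianReal_of_var_ne_zero 0 one_ne_zero]
  have hmeas : Measurable (fun x => (gaussianPDFReal 0 1 x).toNNReal) :=
    (measurable_gaussianPDFReal 0 1).real_toNNReal
  have : volume.withDensity (gaussianPDF 0 1)
      = volume.withDensity (fun x => ((gaussianPDFReal 0 1 x).toNNReal : ℝ≥0∞)) := rfl
  rw [this, integral_withDensity_eq_integral_smul hmeas]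
  congr 1; ext x
  rw [NNReal.smul_def, Real.coe_toNNReal _ (gaussianPDFReal_nonneg 0 1 x)]
  rfl

lemma gauss_integrable_pow (n : ℕ) :
    Integrable (fun x : ℝ => x ^ n) (gaussianReal 0 1) := by
  rw [gaussianReal_of_var_ne_zero 0 one_ne_zero]
  have hmeas : Measurable (fun x => (gaussianPDFReal 0 1 x).toNNReal) :=
    (measurable_gaussianPDFReal 0 1).real_toNNReal
  have h : volume.withDensity (gaussianPDF 0 1)
      = volume.withDensity (fun x => ((gaussianPDFReal 0 1 x).toNNReal : ℝ≥0∞)) := rfl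
  rw [h, integrable_withDensity_iff_integrable_smul hmeas]
  apply ((integrable_pow_gw n).const_mul ((Real.sqrt (2 * π))⁻¹)).congr
  filter_upwards with x
  rw [NNReal.smul_def, Real.coe_toNNReal _ (gaussianPDFReal_nonneg 0 1 x), gpdf_eq]
  simp only [smul_eq_mul]; ring

lemma sqrt_two_pi_pos : (0:ℝ) < Real.sqrt (2*π) := Real.sqrt_pos.2 (by positivity)

lemma gmom_eq (n : ℕ) : ∫ x, x ^ n ∂(gaussianReal 0 1)
    = (Real.sqrt (2 * π))⁻¹ * ∫ x : ℝ, x ^ n * gw x := by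
  rw [gauss_integral]
  rw [← MeasureTheory.integral_const_mul]
  congr 1; ext x; rw [gpdf_eq]; ring

lemma gmom_zero : ∫ x, x ^ 0 ∂(gaussianReal 0 1) = 1 := by simp
lemma gw_int_two : ∫ x : ℝ, x ^ 2 * gw x = Real.sqrt (2*π) := by
  have h := gw_rec 0
  simp only [pow_zero, one_mul] at h
  rw [h, gw_int0]; norm_num
lemma gw_int_four : ∫ x : ℝ, x ^ 4 * gw x = 3 * Real.sqrt (2*π) := by
  have h := gw_rec 2
  rw [gw_int_two] at h
  rw [h]; norm_num
lemma gw_int_six : ∫ x : ℝ, x ^ 6 * gw x = 15 * Real.sqrt (2*π) := by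
  have h := gw_rec 4
  rw [gw_int_four] at h
  rw [h]; norm_num; ring
lemma gmom_two : ∫ x, x ^ 2 ∂(gaussianReal 0 1) = 1 := by
  rw [gmom_eq, gw_int_two, inv_mul_cancel₀ sqrt_two_pi_pos.ne']
lemma gmom_four : ∫ x, x ^ 4 ∂(gaussianReal 0 1) = 3 := by
  rw [gmom_eq, gw_int_four, inv_mul_eq_div, mul_div_assoc,
    div_self sqrt_two_pi_pos.ne', mul_one]
lemma gmom_six : ∫ x, x ^ 6 ∂(gaussianReal 0 1) = 15 := by
  rw [gmom_eq, gw_int_six, inv_mul_eq_div, mul_div_assoc,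
    div_self sqrt_two_pi_pos.ne', mul_one]

lemma pi_int {n : ℕ} (f : Fin n → ℝ → ℝ) (hf : ∀ i, Integrable (f i) γ) :
    Integrable (fun x : Fin n → ℝ => ∏ i, f i (x i)) (Measure.pi fun _ => γ) := by
  induction n with
  | zero =>
      simp only [Finset.univ_eq_empty, Finset.prod_empty]
      exact integrable_const 1
  | succ n n_ih =>
      have hmp := ((measurePreserving_piFinSuccAbove (fun _ : Fin (n+1) => γ) 0).symm)
      rw [← hmp.integrable_comp_emb (MeasurableEquiv.measurableEmbedding _)]
      simp_rw [MeasurableEquiv.piFinSuccAbove_symm_apply, Fin.insertNthEquiv,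
        Fin.prod_univ_succ, Fin.insertNth_zero]
      simp only [Fin.zero_succAbove, Function.comp_def, Fin.cons_zero, Fin.cons_succ,
        Equiv.coe_fn_mk]
      have h2 : Integrable (fun (x : Fin n → ℝ) ↦ ∏ j, f (Fin.succ j) (x j))
          (Measure.pi fun _ => γ) := n_ih _ (fun i ↦ hf _)
      exact Integrable.mul_prod (hf 0) h2

lemma pi_integral {n : ℕ} (f : Fin n → ℝ → ℝ) :
    ∫ x : Fin n → ℝ, ∏ i, f i (x i) ∂(Measure.pi fun _ => γ) = ∏ i, ∫ x, f i x ∂γ := by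
  induction n with
  | zero =>
      have : IsProbabilityMeasure (Measure.pi fun _ : Fin 0 => γ) := by infer_instance
      simp
  | succ n n_ih =>
      rw [← ((measurePreserving_piFinSuccAbove
        (fun _ : Fin (n+1) => γ) 0).symm).integral_comp']
      simp_rw [MeasurableEquiv.piFinSuccAbove_symm_apply, Fin.insertNthEquiv,
        Fin.prod_univ_succ, Fin.insertNth_zero, Equiv.coe_fn_mk]
      simp only [Fin.zero_succAbove, Fin.cons_zero, Fin.cons_succ, cast_eq]
      rw [integral_prod_mul (μ := γ) (ν := Measure.pi fun _ : Fin n => γ)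
        (f := f 0) (g := fun y : Fin n → ℝ => ∏ i : Fin n, f (Fin.succ i) (y i)), n_ih]

def cnt {m : ℕ} (i j k l : Fin m) : ℕ :=
  (if i = l then 1 else 0) + (if j = l then 1 else 0) + (if k = l then 1 else 0)

lemma single_factor {m : ℕ} (a : Fin m) (y : Fin m → ℝ) :
    (∏ l, (y l) ^ (2 * if a = l then 1 else 0)) = (y a) ^ 2 := by
  have h : ∀ l, (y l) ^ (2 * if a = l then 1 else 0) = if a = l then (y l) ^ 2 else 1 := by
    intro l; split <;> simp
  rw [Finset.prod_congr rfl (fun l _ => h l), Finset.prod_ite_eq]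
  simp

lemma factor_eq {m : ℕ} (i j k : Fin m) (y : Fin m → ℝ) :
    (y i)^2 * (y j)^2 * (y k)^2 = ∏ l, (y l) ^ (2 * cnt i j k l) := by
  simp only [cnt, Nat.mul_add, pow_add, Finset.prod_mul_distrib, single_factor]

lemma term_integral {m : ℕ} (i j k : Fin m) :
    ∫ y : Fin m → ℝ, (y i)^2 * (y j)^2 * (y k)^2 ∂(Measure.pi fun _ => γ)
    = ∏ l, ∫ x : ℝ, x ^ (2 * cnt i j k l) ∂γ := by
  rw [← pi_integral (fun l t => t ^ (2 * cnt i j k l))]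
  simp_rw [factor_eq]

lemma term_int {m : ℕ} (i j k : Fin m) :
    Integrable (fun y : Fin m → ℝ => (y i)^2 * (y j)^2 * (y k)^2) (Measure.pi fun _ => γ) := by
  have := pi_int (fun l t => t ^ (2 * cnt i j k l)) (fun l => gauss_integrable_pow _)
  apply this.congr
  filter_upwards with y
  rw [← factor_eq]

lemma prodval {m : ℕ} (i j k : Fin m) :
    (∏ l, ∫ x : ℝ, x ^ (2 * cnt i j k l) ∂γ)
    = 1 + 2*((if i=j then (1:ℝ) else 0) + (if i=k then 1 else 0) + (if j=k then 1 else 0))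
      + 8*(if i=j then (1:ℝ) else 0)*(if j=k then 1 else 0) := by
  have hprod : ∀ (a : Fin m) (c : ℝ), (∏ l, if a = l then c else 1) = c := by
    intro a c; rw [Finset.prod_ite_eq]; simp
  rcases eq_or_ne i j with hij | hij
  · rcases eq_or_ne j k with hjk | hjk
    · -- i = j = k
      subst hij; subst hjk
      have h : ∀ l, ∫ x : ℝ, x ^ (2 * cnt i i i l) ∂γ = if i = l then (15:ℝ) else 1 := by
        intro l
        by_cases hil : i = l
        · simp only [cnt, hil, if_pos rfl]
          norm_num [gmom_six]
        · simp only [cnt, if_neg hil]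
          norm_num [gmom_zero]
      rw [Finset.prod_congr rfl (fun l _ => h l), hprod]
      simp only [if_pos rfl]; norm_num
    · -- i = j ≠ k
      subst hij
      have hik : i ≠ k := hjk
      have h : ∀ l, ∫ x : ℝ, x ^ (2 * cnt i i k l) ∂γ = if i = l then (3:ℝ) else 1 := by
        intro l
        by_cases hil : i = l
        · have hkl : ¬ k = l := fun h => hik (h ▸ hil)
          simp only [cnt, hil, if_pos rfl, if_neg hkl]
          norm_num [gmom_four]
        · by_cases hkl : k = l
          · simp only [cnt, if_neg hil, hkl, if_pos rfl]
            norm_num [gmom_two]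
          · simp only [cnt, if_neg hil, if_neg hkl]
            norm_num [gmom_zero]
      rw [Finset.prod_congr rfl (fun l _ => h l), hprod]
      simp only [if_pos rfl, if_neg hjk, if_neg hik]; norm_num
  · rcases eq_or_ne j k with hjk | hjk
    · -- j = k, i ≠ j
      subst hjk
      have hik : i ≠ j := hij
      have h : ∀ l, ∫ x : ℝ, x ^ (2 * cnt i j j l) ∂γ = if j = l then (3:ℝ) else 1 := by
        intro l
        by_cases hjl : j = l
        · have hil : ¬ i = l := fun h => hij (h.trans hjl.symm)
          simp only [cnt, if_neg hil, hjl, if_pos rfl]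
          norm_num [gmom_four]
        · by_cases hil : i = l
          · simp only [cnt, hil, if_pos rfl, if_neg hjl]
            norm_num [gmom_two]
          · simp only [cnt, if_neg hil, if_neg hjl]
            norm_num [gmom_zero]
      rw [Finset.prod_congr rfl (fun l _ => h l), hprod]
      simp only [if_neg hij, if_pos rfl]; norm_num
    · rcases eq_or_ne i k with hik | hik
      · -- i = k, others distinct
        subst hik
        have h : ∀ l, ∫ x : ℝ, x ^ (2 * cnt i j i l) ∂γ = if i = l then (3:ℝ) else 1 := by
          intro l
          by_cases hil : i = l
          · have hjl : ¬ j = l := fun h => hij (hil.trans h.symm)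
            simp only [cnt, hil, if_pos rfl, if_neg hjl]
            norm_num [gmom_four]
          · by_cases hjl : j = l
            · simp only [cnt, if_neg hil, hjl, if_pos rfl]
              norm_num [gmom_two]
            · simp only [cnt, if_neg hil, if_neg hjl]
              norm_num [gmom_zero]
        rw [Finset.prod_congr rfl (fun l _ => h l), hprod]
        simp only [if_neg hij, if_neg hjk, if_pos rfl]; norm_num
      · -- all distinct
        have h : ∀ l, ∫ x : ℝ, x ^ (2 * cnt i j k l) ∂γ = (1:ℝ) := by
          intro l
          by_cases hil : i = l
          · have hjl : ¬ j = l := fun h => hij (hil.trans h.symm)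
            have hkl : ¬ k = l := fun h => hik (hil.trans h.symm)
            simp only [cnt, hil, if_pos rfl, if_neg hjl, if_neg hkl]
            norm_num [gmom_two]
          · by_cases hjl : j = l
            · have hkl : ¬ k = l := fun h => hjk (hjl.trans h.symm)
              simp only [cnt, if_neg hil, hjl, if_pos rfl, if_neg hkl]
              norm_num [gmom_two]
            · by_cases hkl : k = l
              · simp only [cnt, if_neg hil, if_neg hjl, hkl, if_pos rfl]
                norm_num [gmom_two]
              · simp only [cnt, if_neg hil, if_neg hjl, if_neg hkl]
                norm_num [gmom_zero]
        rw [Finset.prod_congr rfl (fun l _ => h l), Finset.prod_const_one]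
        simp only [if_neg hij, if_neg hjk, if_neg hik]; norm_num

lemma cube_expand {m : ℕ} (a : Fin m → ℝ) :
    (∑ i, a i)^3 = ∑ i, ∑ j, ∑ k, a i * a j * a k := by
  calc (∑ i, a i)^3 = (∑ i, a i) * (∑ j, a j) * (∑ k, a k) := by ring
    _ = ∑ i, ∑ j, ∑ k, a i * a j * a k := by
        rw [Finset.sum_mul_sum, Finset.sum_mul]
        congr 1; ext i
        rw [Finset.sum_mul]
        congr 1; ext j
        rw [Finset.mul_sum]

lemma sum_ite_one {m : ℕ} (i : Fin m) :
    (∑ x : Fin m, (if i = x then (1:ℝ) else 0)) = 1 := by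
  rw [Finset.sum_ite_eq]; simp

lemma sum_v (m : ℕ) :
    (∑ i : Fin m, ∑ j : Fin m, ∑ k : Fin m,
      ((1:ℝ) + 2*((if i=j then (1:ℝ) else 0) + (if i=k then 1 else 0) + (if j=k then 1 else 0))
        + 8*(if i=j then (1:ℝ) else 0)*(if j=k then 1 else 0)))
    = m^3 + 6*m^2 + 8*m := by
  have h1 : ∀ i j : Fin m, (∑ k : Fin m,
      ((1:ℝ) + 2*((if i=j then (1:ℝ) else 0) + (if i=k then 1 else 0) + (if j=k then 1 else 0))
        + 8*(if i=j then (1:ℝ) else 0)*(if j=k then 1 else 0)))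
      = m * (1 + 2*(if i=j then (1:ℝ) else 0)) + 4 + 8*(if i=j then (1:ℝ) else 0) := by
    intro i j
    have e : ∀ k : Fin m,
        (1:ℝ) + 2*((if i=j then (1:ℝ) else 0) + (if i=k then 1 else 0) + (if j=k then 1 else 0))
          + 8*(if i=j then (1:ℝ) else 0)*(if j=k then 1 else 0)
        = ((1:ℝ) + 2*(if i=j then (1:ℝ) else 0)) + (2 * (if i=k then (1:ℝ) else 0)
            + (2 + 8*(if i=j then (1:ℝ) else 0)) * (if j=k then (1:ℝ) else 0)) := by
      intro k; ring
    rw [Finset.sum_congr rfl (fun k _ => e k), Finset.sum_add_distrib, Finset.sum_const,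
      Finset.card_univ, Fintype.card_fin, Finset.sum_add_distrib,
      ← Finset.mul_sum, ← Finset.mul_sum, sum_ite_one i, sum_ite_one j]
    push_cast
    ring
  rw [Finset.sum_congr rfl (fun i _ => Finset.sum_congr rfl (fun j _ => h1 i j))]
  have h2 : ∀ i : Fin m, (∑ j : Fin m,
      ((m:ℝ) * (1 + 2*(if i=j then (1:ℝ) else 0)) + 4 + 8*(if i=j then (1:ℝ) else 0)))
      = m * m + 2 * m + 4 * m + 8 := by
    intro i
    have e : ∀ j : Fin m,
        (m:ℝ) * (1 + 2*(if i=j then (1:ℝ) else 0)) + 4 + 8*(if i=j then (1:ℝ) else 0)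
        = ((m:ℝ) + 4) + (2 * m + 8) * (if i=j then (1:ℝ) else 0) := by
      intro j; ring
    rw [Finset.sum_congr rfl (fun j _ => e j), Finset.sum_add_distrib, Finset.sum_const,
      Finset.card_univ, Fintype.card_fin, ← Finset.mul_sum, sum_ite_one i]
    push_cast
    ring
  rw [Finset.sum_congr rfl (fun i _ => h2 i), Finset.sum_const, Finset.card_univ,
    Fintype.card_fin]
  push_cast
  ring

lemma pi_sixth_int (m : ℕ) :
    Integrable (fun y : Fin m → ℝ => (∑ i, (y i)^2)^3) (Measure.pi fun _ => γ) := by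
  have h : ∀ y : Fin m → ℝ, (∑ i, (y i)^2)^3
      = ∑ i : Fin m, ∑ j : Fin m, ∑ k : Fin m, (y i)^2 * (y j)^2 * (y k)^2 := by
    intro y; exact cube_expand _
  simp_rw [h]
  apply integrable_finset_sum _ (fun i _ => ?_)
  apply integrable_finset_sum _ (fun j _ => ?_)
  apply integrable_finset_sum _ (fun k _ => ?_)
  exact term_int i j k

lemma pi_sixth (m : ℕ) :
    ∫ y : Fin m → ℝ, (∑ i, (y i)^2)^3 ∂(Measure.pi fun _ => γ)
    = m^3 + 6*m^2 + 8*m := by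
  have h : ∀ y : Fin m → ℝ, (∑ i, (y i)^2)^3
      = ∑ i : Fin m, ∑ j : Fin m, ∑ k : Fin m, (y i)^2 * (y j)^2 * (y k)^2 := by
    intro y; exact cube_expand _
  simp_rw [h]
  rw [integral_finset_sum _ (fun i _ => by
    apply integrable_finset_sum _ (fun j _ => ?_)
    apply integrable_finset_sum _ (fun k _ => ?_)
    exact term_int i j k)]
  have : ∀ i : Fin m, ∫ y : Fin m → ℝ, (∑ j : Fin m, ∑ k : Fin m,
      (y i)^2 * (y j)^2 * (y k)^2) ∂(Measure.pi fun _ => γ)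
      = ∑ j : Fin m, ∑ k : Fin m, (∏ l, ∫ x : ℝ, x ^ (2 * cnt i j k l) ∂γ) := by
    intro i
    rw [integral_finset_sum _ (fun j _ => by
      apply integrable_finset_sum _ (fun k _ => ?_)
      exact term_int i j k)]
    apply Finset.sum_congr rfl (fun j _ => ?_)
    rw [integral_finset_sum _ (fun k _ => term_int i j k)]
    exact Finset.sum_congr rfl (fun k _ => term_integral i j k)
  rw [Finset.sum_congr rfl (fun i _ => this i)]
  simp_rw [prodval]
  exact sum_v m

lemma metricProj_spec {C : Set (EuclideanSpace ℝ (Fin d))} (hne : C.Nonempty)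
    (hc : IsCompact C) (z : EuclideanSpace ℝ (Fin d)) :
    metricProj C z ∈ C ∧ ∀ c ∈ C, dist z (metricProj C z) ≤ dist z c := by
  have hex : ∃ y, y ∈ C ∧ ∀ c ∈ C, dist z y ≤ dist z c := by
    obtain ⟨y, hy, hmin⟩ := hc.exists_isMinOn hne
      ((continuous_const.dist continuous_id).continuousOn)
    exact ⟨y, hy, fun c hc' => hmin hc'⟩
  rw [metricProj, dif_pos hex]
  exact hex.choose_spec

lemma proj_inner_le {C : Set (EuclideanSpace ℝ (Fin d))} (hne : C.Nonempty)
    (p : EuclideanSpace ℝ (Fin d)) (hmem : p ∈ C) (z : EuclideanSpace ℝ (Fin d))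
    (hmin : ∀ c ∈ C, dist z p ≤ dist z c) (hconv : Convex ℝ C) :
    ∀ w ∈ C, ⟪z - p, w - p⟫ ≤ 0 := by
  have : Nonempty C := hne.to_subtype
  have hbdd : BddBelow (Set.range fun w : C => ‖z - (w : EuclideanSpace ℝ (Fin d))‖) := by
    refine ⟨0, ?_⟩
    rintro b ⟨w, rfl⟩
    exact norm_nonneg _
  have heq : ‖z - p‖ = ⨅ w : C, ‖z - (w : EuclideanSpace ℝ (Fin d))‖ := by
    apply le_antisymm
    · apply le_ciInf
      intro w
      have := hmin w w.2
      rwa [dist_eq_norm, dist_eq_norm] at this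
    · exact ciInf_le hbdd ⟨p, hmem⟩
  exact (norm_eq_iInf_iff_real_inner_le_zero hconv hmem).1 heq

lemma metricProj_inner_le {C : Set (EuclideanSpace ℝ (Fin d))} (hne : C.Nonempty)
    (hc : IsCompact C) (hconv : Convex ℝ C) (z : EuclideanSpace ℝ (Fin d)) :
    ∀ w ∈ C, ⟪z - metricProj C z, w - metricProj C z⟫ ≤ 0 := by
  obtain ⟨hmem, hmin⟩ := metricProj_spec hne hc z
  exact proj_inner_le hne _ hmem z hmin hconv

lemma metricProj_norm_le {C : Set (EuclideanSpace ℝ (Fin d))}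
    (h0 : (0:EuclideanSpace ℝ (Fin d)) ∈ C)
    (hc : IsCompact C) (hconv : Convex ℝ C) (z : EuclideanSpace ℝ (Fin d)) :
    ‖metricProj C z‖ ≤ ‖z‖ := by
  set p := metricProj C z with hp
  have h1 := metricProj_inner_le ⟨0, h0⟩ hc hconv z 0 h0
  have h2 : ⟪z - p, -p⟫ ≤ 0 := by
    have : (0:EuclideanSpace ℝ (Fin d)) - p = -p := by abel
    rwa [this] at h1
  have e : ⟪z - p, -p⟫ = -⟪z, p⟫ + ‖p‖^2 := by
    rw [inner_neg_right, inner_sub_left, real_inner_self_eq_norm_sq]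
    ring
  have h3 : ‖p‖^2 ≤ ⟪z, p⟫ := by rw [e] at h2; linarith
  have h4 : ⟪z, p⟫ ≤ ‖z‖ * ‖p‖ := real_inner_le_norm z p
  rcases eq_or_lt_of_le (norm_nonneg p) with hn | hn
  · rw [← hn]; exact norm_nonneg z
  · nlinarith

lemma metricProj_lipschitz {C : Set (EuclideanSpace ℝ (Fin d))} (hne : C.Nonempty)
    (hc : IsCompact C) (hconv : Convex ℝ C) :
    LipschitzWith 1 (metricProj C) := by
  apply LipschitzWith.of_dist_le_mul
  intro z w
  set p := metricProj C z
  set q := metricProj C w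
  have h1 : ⟪z - p, q - p⟫ ≤ 0 :=
    metricProj_inner_le hne hc hconv z q (metricProj_spec hne hc w).1
  have h2 : ⟪w - q, p - q⟫ ≤ 0 :=
    metricProj_inner_le hne hc hconv w p (metricProj_spec hne hc z).1
  have key : ‖p - q‖^2 ≤ ⟪z - w, p - q⟫ := by
    have hz : z - w = (z - p) + ((p - q) + (q - w)) := by abel
    have e1 : ⟪z - w, p - q⟫
        = ⟪z - p, p - q⟫ + (⟪p - q, p - q⟫ + ⟪q - w, p - q⟫) := by
      rw [hz, inner_add_left, inner_add_left]
    have e2 : ⟪z - p, p - q⟫ = -⟪z - p, q - p⟫ := by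
      rw [← inner_neg_right]; congr 1; abel
    have e3 : ⟪q - w, p - q⟫ = -⟪w - q, p - q⟫ := by
      rw [← inner_neg_left]; congr 1; abel
    rw [e1, e2, e3, real_inner_self_eq_norm_sq]
    linarith
  have h4 : ⟪z - w, p - q⟫ ≤ ‖z - w‖ * ‖p - q‖ := real_inner_le_norm _ _
  rw [dist_eq_norm, dist_eq_norm, NNReal.coe_one, one_mul]
  rcases eq_or_lt_of_le (norm_nonneg (p - q)) with hn | hn
  · rw [← hn]; exact norm_nonneg _
  · nlinarith

lemma fderiv_eq_inner_gradient (h : EuclideanSpace ℝ (Fin d) → ℝ)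
    (hd : Differentiable ℝ h) (y w : EuclideanSpace ℝ (Fin d)) :
    fderiv ℝ h y w = ⟪gradient h y, w⟫ := by
  have := (hd y).hasGradientAt
  rw [gradient]
  exact (InnerProductSpace.toDual_symm_apply).symm

lemma taylor_bound {X : Set (EuclideanSpace ℝ (Fin d))} (hXconv : Convex ℝ X)
    {h : EuclideanSpace ℝ (Fin d) → ℝ} {L : ℝ} (hSm : IsSmoothOn h L X)
    {x s : EuclideanSpace ℝ (Fin d)} (hx : x ∈ X) (hs : s ∈ X) :
    |h s - h x - ⟪gradient h x, s - x⟫| ≤ L / 2 * ‖s - x‖ ^ 2 := by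
  set v := s - x with hv
  have hmem : ∀ t : ℝ, t ∈ Icc (0:ℝ) 1 → x + t • v ∈ X := by
    intro t ⟨ht0, ht1⟩
    have : x + t • v = (1 - t) • x + t • s := by
      rw [hv, smul_sub]; module
    rw [this]
    exact hXconv hx hs (by linarith) ht0 (by ring)
  set φ : ℝ → ℝ := fun t => h (x + t • v) - t * ⟪gradient h x, v⟫ with hφ
  set φ' : ℝ → ℝ := fun t => ⟪gradient h (x + t • v) - gradient h x, v⟫ with hφ'
  have hderiv : ∀ t : ℝ, HasDerivAt φ (φ' t) t := by
    intro t
    have hc : HasDerivAt (fun t : ℝ => x + t • v) v t := by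
      simpa using ((hasDerivAt_id t).smul_const v).const_add x
    have hh := ((hSm.1 (x + t • v)).hasFDerivAt).comp_hasDerivAt t hc
    have hlin : HasDerivAt (fun t : ℝ => t * ⟪gradient h x, v⟫) ⟪gradient h x, v⟫ t := by
      simpa using (hasDerivAt_id t).mul_const ⟪gradient h x, v⟫
    have := hh.sub hlin
    refine this.congr_deriv ?_
    simp only [hφ', inner_sub_left]
    rw [fderiv_eq_inner_gradient h hSm.1]
  have hcont : ContinuousOn (fun t : ℝ => gradient h (x + t • v)) (Icc 0 1) := by
    have hK : (0:ℝ) ≤ |L| * ‖v‖ := by positivity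
    apply LipschitzOnWith.continuousOn (K := (|L| * ‖v‖).toNNReal)
    rw [lipschitzOnWith_iff_dist_le_mul]
    intro t ht u hu
    rw [dist_eq_norm, dist_eq_norm]
    have hb := hSm.2 _ (hmem t ht) _ (hmem u hu)
    have e : x + t • v - (x + u • v) = (t - u) • v := by
      rw [sub_smul]; module
    rw [e, norm_smul, Real.norm_eq_abs] at hb
    calc ‖gradient h (x + t • v) - gradient h (x + u • v)‖ ≤ L * (|t - u| * ‖v‖) := hb
      _ ≤ |L| * (|t - u| * ‖v‖) := by
          apply mul_le_mul_of_nonneg_right (le_abs_self L) (by positivity)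
      _ = (|L| * ‖v‖).toNNReal * |t - u| := by
          rw [Real.coe_toNNReal _ hK]; ring
  have hcont' : ContinuousOn φ' (Icc 0 1) := by
    apply ContinuousOn.inner
    · exact ContinuousOn.sub hcont continuousOn_const
    · exact continuousOn_const
  have hii : IntervalIntegrable φ' volume 0 1 := by
    apply ContinuousOn.intervalIntegrable
    rwa [uIcc_of_le (by norm_num : (0:ℝ) ≤ 1)]
  have hftc : ∫ t in (0:ℝ)..1, φ' t = φ 1 - φ 0 := by
    apply intervalIntegral.integral_eq_sub_of_hasDerivAt
    · intro t _; exact hderiv t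
    · exact hii
  have hφ1 : φ 1 - φ 0 = h s - h x - ⟪gradient h x, v⟫ := by
    simp only [hφ, one_smul, zero_smul, add_zero, one_mul, zero_mul, sub_zero, hv]
    rw [show x + (s - x) = s by abel]
    ring
  have habs : |∫ t in (0:ℝ)..1, φ' t| ≤ ∫ t in (0:ℝ)..1, L * ‖v‖^2 * t := by
    apply le_trans (intervalIntegral.abs_integral_le_integral_abs (by norm_num))
    apply intervalIntegral.integral_mono_on (by norm_num)
    · exact hii.abs
    · apply ContinuousOn.intervalIntegrable
      apply Continuous.continuousOn
      continuity
    · intro t ⟨ht0, ht1⟩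
      have hb := hSm.2 _ (hmem t ⟨ht0, ht1⟩) _ hx
      have e : x + t • v - x = t • v := by abel
      rw [e, norm_smul, Real.norm_eq_abs, abs_of_nonneg ht0] at hb
      calc |φ' t| ≤ ‖gradient h (x + t • v) - gradient h x‖ * ‖v‖ :=
            abs_real_inner_le_norm _ _
        _ ≤ (L * (t * ‖v‖)) * ‖v‖ :=
            mul_le_mul_of_nonneg_right hb (norm_nonneg v)
        _ = L * ‖v‖^2 * t := by ring
  have hval : ∫ t in (0:ℝ)..1, L * ‖v‖^2 * t = L / 2 * ‖v‖^2 := by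
    rw [intervalIntegral.integral_const_mul, integral_id]
    ring
  rw [hftc, hφ1] at habs
  rw [hval] at habs
  exact habs

lemma euclid_norm_six (y : Fin d → ℝ) :
    ‖(MeasurableEquiv.toLp 2 (Fin d → ℝ)) y‖ ^ 6 = (∑ i, (y i)^2)^3 := by
  have he : ∀ i, ((MeasurableEquiv.toLp 2 (Fin d → ℝ)) y) i = y i := fun _ => rfl
  rw [EuclideanSpace.norm_eq]
  rw [show (6:ℕ) = 2*3 by norm_num, pow_mul, Real.sq_sqrt (by positivity)]
  congr 1
  exact Finset.sum_congr rfl fun i _ => by rw [he, Real.norm_eq_abs, sq_abs]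

lemma stdGaussian_norm6 :
    ∫ z, ‖z‖ ^ 6 ∂(stdGaussian d) = d^3 + 6*d^2 + 8*d := by
  rw [_root_.stdGaussian, integral_map_equiv]
  simp_rw [euclid_norm_six]
  exact pi_sixth d

lemma stdGaussian_norm6_int :
    Integrable (fun z : EuclideanSpace ℝ (Fin d) => ‖z‖ ^ 6) (stdGaussian d) := by
  rw [_root_.stdGaussian, integrable_map_equiv]
  have : ((fun z : EuclideanSpace ℝ (Fin d) => ‖z‖ ^ 6) ∘
      (MeasurableEquiv.toLp 2 (Fin d → ℝ)))
      = fun y : Fin d → ℝ => (∑ i, (y i)^2)^3 := by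
    funext y
    exact euclid_norm_six y
  rw [this]
  exact pi_sixth_int d


end AuxTwoPoint

local notation "γ" => gaussianReal 0 1

/-- Lemma 11 (quadratic-error term of the projected-Gaussian two-point estimator). -/
theorem twoPoint_linearization_error (d : ℕ)
    (X : Set (EuclideanSpace ℝ (Fin d))) (hXc : IsCompact X) (hXconv : Convex ℝ X)
    (h : EuclideanSpace ℝ (Fin d) → ℝ) (L : ℝ) (hSm : IsSmoothOn h L X)
    (x : EuclideanSpace ℝ (Fin d)) (hx : x ∈ X) (r : ℝ) (hr0 : 0 < r) :
    (∫ z, ‖((h (x + r • z) - h x) / r) • z - (inner ℝ (gradient h x) z : ℝ) • z‖ ^ 2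
        ∂(zDist X x r)) ≤
      r ^ 2 * L ^ 2 * ((d : ℝ) + 6) ^ 3 / 4 := by
  set S := sShift X x r with hS
  have hS0 : (0 : EuclideanSpace ℝ (Fin d)) ∈ S := ⟨x, hx, by simp⟩
  have hSne : S.Nonempty := ⟨0, hS0⟩
  have hScomp : IsCompact S :=
    hXc.image (((continuous_id.sub continuous_const).const_smul r⁻¹))
  have hSconv : Convex ℝ S := by
    rintro _ ⟨s1, hs1, rfl⟩ _ ⟨s2, hs2, rfl⟩ a b ha hb hab
    refine ⟨a • s1 + b • s2, hXconv hs1 hs2 ha hb hab, ?_⟩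
    conv_lhs => rw [show (x : EuclideanSpace ℝ (Fin d)) = (a+b) • x by rw [hab, one_smul]]
    module
  set P := metricProj S with hP
  set g := gradient h x with hg
  set f : EuclideanSpace ℝ (Fin d) → ℝ :=
    fun z => ‖((h (x + r • z) - h x) / r) • z - (inner ℝ g z : ℝ) • z‖ ^ 2 with hf
  have hfcont : Continuous f := by
    apply Continuous.pow
    apply Continuous.norm
    apply Continuous.sub
    · apply Continuous.fun_smul _ continuous_id
      apply Continuous.div_const
      exact (hSm.1.continuous.comp (continuous_const.add (continuous_id.const_smul r))).sub
        continuous_const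
    · exact (continuous_const.inner continuous_id).fun_smul continuous_id
  have hPlip := metricProj_lipschitz hSne hScomp hSconv
  have key' : ∀ z' ∈ S, f z' ≤ r^2 * L^2 / 4 * ‖z'‖ ^ 6 := by
    intro z' hmem
    obtain ⟨s0, hs0, hs0e⟩ := hmem
    have hs0e' : r⁻¹ • (s0 - x) = z' := hs0e
    have hxrz : x + r • z' ∈ X := by
      have : r • z' = s0 - x := by
        rw [← hs0e', smul_smul, mul_inv_cancel₀ hr0.ne', one_smul]
      rw [this, add_sub_cancel]
      exact hs0
    set c := (h (x + r • z') - h x) / r - (inner ℝ g z' : ℝ) with hc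
    have hfz : f z' = c^2 * ‖z'‖^2 := by
      simp only [hf]
      rw [← sub_smul, norm_smul, Real.norm_eq_abs, mul_pow, sq_abs]
    have htay := taylor_bound hXconv hSm hx hxrz
    have hsx : x + r • z' - x = r • z' := by abel
    rw [hsx] at htay
    have hinner : ⟪g, r • z'⟫ = r * ⟪g, z'⟫ := real_inner_smul_right g z' r
    have hnorm : ‖r • z'‖^2 = r^2 * ‖z'‖^2 := by
      rw [norm_smul, Real.norm_eq_abs, mul_pow, sq_abs]
    rw [hinner, hnorm] at htay
    have hcabs : |c| ≤ L / 2 * r * ‖z'‖^2 := by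
      have : c = (h (x + r • z') - h x - r * ⟪g, z'⟫) / r := by
        rw [hc]; field_simp
      rw [this, abs_div, abs_of_pos hr0, div_le_iff₀ hr0]
      calc |h (x + r • z') - h x - r * ⟪g, z'⟫| ≤ L / 2 * (r^2 * ‖z'‖^2) := htay
        _ = L / 2 * r * ‖z'‖^2 * r := by ring
    have hc2 : c^2 ≤ L^2 * r^2 / 4 * ‖z'‖^4 := by
      have h1 : |c|^2 ≤ (L / 2 * r * ‖z'‖^2)^2 :=
        pow_le_pow_left₀ (abs_nonneg c) hcabs 2
      rw [sq_abs] at h1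
      calc c^2 ≤ (L / 2 * r * ‖z'‖^2)^2 := h1
        _ = L^2 * r^2 / 4 * ‖z'‖^4 := by ring
    calc f z' = c^2 * ‖z'‖^2 := hfz
      _ ≤ (L^2 * r^2 / 4 * ‖z'‖^4) * ‖z'‖^2 := by
          apply mul_le_mul_of_nonneg_right hc2 (by positivity)
      _ = r^2 * L^2 / 4 * ‖z'‖^6 := by ring
  have key : ∀ z : EuclideanSpace ℝ (Fin d),
      f (P z) ≤ r^2 * L^2 / 4 * ‖z‖ ^ 6 := by
    intro z
    have h1 := key' (P z) (metricProj_spec hSne hScomp z).1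
    have h2 : ‖P z‖ ≤ ‖z‖ := metricProj_norm_le hS0 hScomp hSconv z
    apply h1.trans
    apply mul_le_mul_of_nonneg_left _ (by positivity)
    exact pow_le_pow_left₀ (norm_nonneg _) h2 6
  have hmap : ∫ z, f z ∂(zDist X x r) = ∫ z, f (P z) ∂(stdGaussian d) := by
    rw [zDist]
    exact integral_map (hPlip.continuous.aemeasurable) hfcont.aestronglyMeasurable
  rw [show (∫ z, ‖((h (x + r • z) - h x) / r) • z - (inner ℝ (gradient h x) z : ℝ) • z‖ ^ 2
        ∂(zDist X x r)) = ∫ z, f z ∂(zDist X x r) from rfl, hmap]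
  have step1 : ∫ z, f (P z) ∂(stdGaussian d)
      ≤ ∫ z, r^2 * L^2 / 4 * ‖z‖ ^ 6 ∂(stdGaussian d) := by
    apply integral_mono_of_nonneg
    · filter_upwards with z
      rw [hf]; positivity
    · exact (stdGaussian_norm6_int).const_mul _
    · filter_upwards with z
      exact key z
  apply step1.trans
  rw [integral_const_mul, stdGaussian_norm6]
  have hd : (0:ℝ) ≤ (d:ℝ) := Nat.cast_nonneg d
  have hfac : (d:ℝ)^3 + 6*(d:ℝ)^2 + 8*(d:ℝ) ≤ ((d:ℝ) + 6)^3 := by nlinarith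
  have hcoef : (0:ℝ) ≤ r^2 * L^2 / 4 := by positivity
  calc r^2 * L^2 / 4 * ((d:ℝ)^3 + 6*(d:ℝ)^2 + 8*(d:ℝ))
      ≤ r^2 * L^2 / 4 * ((d:ℝ) + 6)^3 := mul_le_mul_of_nonneg_left hfac hcoef
    _ = r ^ 2 * L ^ 2 * ((d : ℝ) + 6) ^ 3 / 4 := by ring

end
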